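/- There exist a bounded, simply connected domain Ω ⊂ ℝ² with real analytic boundary, a function u ∈ C^∞ on the closure of Ω that is not identically zero and is not radial with respect to any point of ℝ², and a C^∞ function Φ : ℝ² → ℝ whose zero set has empty interior, such that Φ(Δu, det D²u) = 0 in Ω and u = 0, Du = 0 on ∂Ω. In particular, the radial-symmetry conclusion of the main theorem fails if real analyticity of u is weakened to C^∞ smoothness. -/

import Mathlib

set_option maxHeartbeats 2000000

open Set Metric Topology Asymptotics MvPolynomial Matrix

/-- Partial derivative with respect to the first variable. -/
noncomputable def pdx (f : ℝ × ℝ → ℝ) (p : ℝ × ℝ) : ℝ :=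
  deriv (fun x => f (x, p.2)) p.1

/-- Partial derivative with respect to the second variable. -/
noncomputable def pdy (f : ℝ × ℝ → ℝ) (p : ℝ × ℝ) : ℝ :=
  deriv (fun y => f (p.1, y)) p.2

/-- The Laplacian `Δu = u_xx + u_yy`. -/
noncomputable def lap (f : ℝ × ℝ → ℝ) (p : ℝ × ℝ) : ℝ :=
  pdx (pdx f) p + pdy (pdy f) p

/-- The Hessian determinant `det D²u = u_xx u_yy - u_xy²`. -/
noncomputable def hessDet (f : ℝ × ℝ → ℝ) (p : ℝ × ℝ) : ℝ :=
  pdx (pdx f) p * pdy (pdy f) p - (pdx (pdy f) p) ^ 2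

/-- The Jacobian `J[f,g] = f_x g_y - f_y g_x`. -/
noncomputable def jacDet (f g : ℝ × ℝ → ℝ) (p : ℝ × ℝ) : ℝ :=
  pdx f p * pdy g p - pdy f p * pdx g p

/-! ### Auxiliary definitions and lemmas for the counterexample -/

section CtrEx

open scoped ContDiff

/-- The smooth profile function: `gg t = expNegInvGlue (1/64 - t)`. -/
noncomputable def gg (t : ℝ) : ℝ := expNegInvGlue (1/64 - t)

lemma hgg : ContDiff ℝ ∞ gg :=
  (expNegInvGlue.contDiff (n := ⊤)).comp (contDiff_const.sub contDiff_id)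

noncomputable def gg' := deriv gg
lemma hgg' : ContDiff ℝ ∞ gg' := (contDiff_infty_iff_deriv.mp hgg).2
noncomputable def gg'' := deriv gg'
lemma hgg'' : ContDiff ℝ ∞ gg'' := (contDiff_infty_iff_deriv.mp hgg').2

lemma ggz {t : ℝ} (ht : 1/64 ≤ t) : gg t = 0 :=
  expNegInvGlue.zero_of_nonpos (by simp [gg]; linarith)

lemma deriv_vanish {f : ℝ → ℝ} (hf : Continuous (deriv f)) (hv : ∀ t, 1/64 ≤ t → f t = 0)
    {t : ℝ} (ht : 1/64 ≤ t) : deriv f t = 0 := by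
  have h1 : EqOn (deriv f) 0 (Ioi (1/64 : ℝ)) := by
    intro s hs
    have : f =ᶠ[nhds s] (fun _ => 0) := by
      filter_upwards [Ioi_mem_nhds hs] with x hx
      exact hv x (le_of_lt hx)
    simp [this.deriv_eq]
  have h2 := h1.closure hf continuous_const
  have := h2 (by rw [closure_Ioi]; exact ht)
  simpa using this

lemma gg'z {t : ℝ} (ht : 1/64 ≤ t) : gg' t = 0 :=
  deriv_vanish hgg'.continuous (fun _ h => ggz h) ht
lemma gg''z {t : ℝ} (ht : 1/64 ≤ t) : gg'' t = 0 :=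
  deriv_vanish hgg''.continuous (fun _ h => gg'z h) ht

lemma hasDerivAt_gg (s : ℝ) : HasDerivAt gg (gg' s) s :=
  ((hgg.differentiable (by simp)) s).hasDerivAt
lemma hasDerivAt_gg' (s : ℝ) : HasDerivAt gg' (gg'' s) s :=
  ((hgg'.differentiable (by simp)) s).hasDerivAt

lemma hd_inner (a y x : ℝ) : HasDerivAt (fun x : ℝ => (x - a)^2 + y^2) (2*(x-a)) x := by
  have h1 : HasDerivAt (fun x : ℝ => (x - a)) 1 x := (hasDerivAt_id x).sub_const a
  have := (h1.pow 2).add_const (y^2)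
  exact this.congr_deriv (by norm_num)

lemma hd_inner_y (a y x : ℝ) : HasDerivAt (fun y : ℝ => (x - a)^2 + y^2) (2*y) y := by
  have h1 : HasDerivAt (fun y : ℝ => y) 1 y := hasDerivAt_id y
  have := ((h1.pow 2).const_add ((x-a)^2))
  exact this.congr_deriv (by norm_num)

lemma hdc {f f' : ℝ → ℝ} (hf : ∀ s, HasDerivAt f (f' s) s) (a y x : ℝ) :
    HasDerivAt (fun x => f ((x - a)^2 + y^2)) (f' ((x-a)^2+y^2) * (2*(x-a))) x :=
  (hf _).comp x (hd_inner a y x)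

lemma hdcy {f f' : ℝ → ℝ} (hf : ∀ s, HasDerivAt f (f' s) s) (a y x : ℝ) :
    HasDerivAt (fun y => f ((x - a)^2 + y^2)) (f' ((x-a)^2+y^2) * (2*y)) y :=
  (hf _).comp y (hd_inner_y a y x)

/-- The counterexample solution: two disjoint radial bumps. -/
noncomputable def uu (p : ℝ × ℝ) : ℝ :=
  gg ((p.1 - 1/2)^2 + p.2^2) + gg ((p.1 - (-1/2))^2 + p.2^2)

lemma pdx_uu (p : ℝ × ℝ) : pdx uu p
    = gg' ((p.1 - 1/2)^2 + p.2^2) * (2*(p.1 - 1/2))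
      + gg' ((p.1 - (-1/2))^2 + p.2^2) * (2*(p.1 - (-1/2))) := by
  have h := (hdc hasDerivAt_gg (1/2) p.2 p.1).add (hdc hasDerivAt_gg (-1/2) p.2 p.1)
  exact h.deriv

lemma pdy_uu (p : ℝ × ℝ) : pdy uu p
    = gg' ((p.1 - 1/2)^2 + p.2^2) * (2*p.2)
      + gg' ((p.1 - (-1/2))^2 + p.2^2) * (2*p.2) := by
  have h := (hdcy hasDerivAt_gg (1/2) p.2 p.1).add (hdcy hasDerivAt_gg (-1/2) p.2 p.1)
  exact h.deriv

lemma pdxx_uu (p : ℝ × ℝ) : pdx (pdx uu) p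
    = (gg'' ((p.1 - 1/2)^2 + p.2^2) * (2*(p.1 - 1/2))) * (2*(p.1-1/2))
        + gg' ((p.1 - 1/2)^2 + p.2^2) * 2
      + ((gg'' ((p.1 - (-1/2))^2 + p.2^2) * (2*(p.1 - (-1/2)))) * (2*(p.1-(-1/2)))
        + gg' ((p.1 - (-1/2))^2 + p.2^2) * 2) := by
  have e : (fun x => pdx uu (x, p.2)) = fun x =>
      gg' ((x - 1/2)^2 + p.2^2) * (2*(x - 1/2))
      + gg' ((x - (-1/2))^2 + p.2^2) * (2*(x - (-1/2))) := by
    funext x; exact pdx_uu (x, p.2)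
  have hlin : ∀ a x : ℝ, HasDerivAt (fun x : ℝ => 2*(x - a)) 2 x := by
    intro a x
    simpa using (((hasDerivAt_id x).sub_const a).const_mul 2)
  have h1 := (hdc hasDerivAt_gg' (1/2) p.2 p.1).mul (hlin (1/2) p.1)
  have h2 := (hdc hasDerivAt_gg' (-1/2) p.2 p.1).mul (hlin (-1/2) p.1)
  have h := h1.add h2
  rw [pdx, e]
  exact h.deriv

lemma pdyy_uu (p : ℝ × ℝ) : pdy (pdy uu) p
    = (gg'' ((p.1 - 1/2)^2 + p.2^2) * (2*p.2)) * (2*p.2)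
        + gg' ((p.1 - 1/2)^2 + p.2^2) * 2
      + ((gg'' ((p.1 - (-1/2))^2 + p.2^2) * (2*p.2)) * (2*p.2)
        + gg' ((p.1 - (-1/2))^2 + p.2^2) * 2) := by
  have e : (fun y => pdy uu (p.1, y)) = fun y =>
      gg' ((p.1 - 1/2)^2 + y^2) * (2*y)
      + gg' ((p.1 - (-1/2))^2 + y^2) * (2*y) := by
    funext y; exact pdy_uu (p.1, y)
  have hlin : ∀ y : ℝ, HasDerivAt (fun y : ℝ => 2*y) 2 y := by
    intro y; simpa using ((hasDerivAt_id y).const_mul 2)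
  have h1 := (hdcy hasDerivAt_gg' (1/2) p.2 p.1).mul (hlin p.2)
  have h2 := (hdcy hasDerivAt_gg' (-1/2) p.2 p.1).mul (hlin p.2)
  have h := h1.add h2
  rw [pdy, e]; exact h.deriv

lemma pdxy_uu (p : ℝ × ℝ) : pdx (pdy uu) p
    = gg'' ((p.1 - 1/2)^2 + p.2^2) * (2*(p.1-1/2)) * (2*p.2)
      + gg'' ((p.1 - (-1/2))^2 + p.2^2) * (2*(p.1-(-1/2))) * (2*p.2) := by
  have e : (fun x => pdy uu (x, p.2)) = fun x =>
      gg' ((x - 1/2)^2 + p.2^2) * (2*p.2)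
      + gg' ((x - (-1/2))^2 + p.2^2) * (2*p.2) := by
    funext x; exact pdy_uu (x, p.2)
  have h1 := (hdc hasDerivAt_gg' (1/2) p.2 p.1).mul_const (2*p.2)
  have h2 := (hdc hasDerivAt_gg' (-1/2) p.2 p.1).mul_const (2*p.2)
  have h := h1.add h2
  rw [pdx, e]; exact h.deriv

/-- The signature curve. -/
noncomputable def GG (t : ℝ) : ℝ × ℝ :=
  (4*t*gg'' t + 4*gg' t, 8*t*(gg'' t)*(gg' t) + 4*(gg' t)^2)

lemma hGG : ContDiff ℝ ∞ GG := by
  apply ContDiff.prodMk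
  · exact (((contDiff_const.mul contDiff_id).mul hgg'').add (contDiff_const.mul hgg'))
  · exact ((((contDiff_const.mul contDiff_id).mul hgg'').mul hgg').add
      (contDiff_const.mul (hgg'.pow 2)))

noncomputable def SS : Set (ℝ × ℝ) := GG '' Icc 0 (1/64)

lemma SS_compact : IsCompact SS := isCompact_Icc.image hGG.continuous

lemma SS_interior : interior SS = ∅ := by
  by_contra h
  have hne : (interior SS).Nonempty := nonempty_iff_ne_empty.mpr h
  have h2 := Real.dimH_of_nonempty_interior hne
  have h4 := (hGG.of_le (by exact_mod_cast le_top :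
    (1 : WithTop ℕ∞) ≤ ((⊤ : ℕ∞) : WithTop ℕ∞))).dimH_range_le
  have h3 := le_trans (dimH_mono (image_subset_range GG (Icc 0 (1/64)))) h4
  rw [show SS = GG '' Icc 0 (1/64) from rfl] at h2
  rw [h2] at h3
  have e1 : Module.finrank ℝ (ℝ × ℝ) = 2 := by simp
  have e2 : Module.finrank ℝ ℝ = 1 := Module.finrank_self ℝ
  rw [e1, e2] at h3
  exact absurd h3 (by norm_num)

lemma sep (p : ℝ × ℝ) :
    1/64 ≤ (p.1 - 1/2)^2 + p.2^2 ∨ 1/64 ≤ (p.1 - (-1/2))^2 + p.2^2 := by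
  by_contra h
  push_neg at h
  obtain ⟨h1, h2⟩ := h
  nlinarith [sq_nonneg p.2]

/-- The key pointwise identity: the pair `(Δu, det D²u)` always lies on the curve `SS`. -/
lemma key_mem (p : ℝ × ℝ) : (lap uu p, hessDet uu p) ∈ SS := by
  rcases sep p with h | h
  · -- bump 1 inactive
    have e1 : gg' ((p.1 - 1/2)^2 + p.2^2) = 0 := gg'z h
    have e2 : gg'' ((p.1 - 1/2)^2 + p.2^2) = 0 := gg''z h
    rcases le_total ((p.1 - (-1/2))^2 + p.2^2) (1/64) with h2 | h2
    · refine ⟨(p.1 - (-1/2))^2 + p.2^2, ⟨by positivity, h2⟩, ?_⟩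
      rw [GG, Prod.ext_iff]
      constructor
      · show _ = lap uu p
        rw [lap, pdxx_uu, pdyy_uu, e1, e2]; ring
      · show _ = hessDet uu p
        rw [hessDet, pdxx_uu, pdyy_uu, pdxy_uu, e1, e2]; ring
    · -- both inactive
      have e3 : gg' ((p.1 - (-1/2))^2 + p.2^2) = 0 := gg'z h2
      have e4 : gg'' ((p.1 - (-1/2))^2 + p.2^2) = 0 := gg''z h2
      refine ⟨1/64, ⟨by norm_num, le_refl _⟩, ?_⟩
      rw [GG, Prod.ext_iff, gg'z (le_refl _), gg''z (le_refl _)]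
      constructor
      · show _ = lap uu p
        rw [lap, pdxx_uu, pdyy_uu, e1, e2, e3, e4]; ring
      · show _ = hessDet uu p
        rw [hessDet, pdxx_uu, pdyy_uu, pdxy_uu, e1, e2, e3, e4]; ring
  · -- bump 2 inactive
    have e1 : gg' ((p.1 - (-1/2))^2 + p.2^2) = 0 := gg'z h
    have e2 : gg'' ((p.1 - (-1/2))^2 + p.2^2) = 0 := gg''z h
    rcases le_total ((p.1 - 1/2)^2 + p.2^2) (1/64) with h2 | h2
    · refine ⟨(p.1 - 1/2)^2 + p.2^2, ⟨by positivity, h2⟩, ?_⟩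
      rw [GG, Prod.ext_iff]
      constructor
      · show _ = lap uu p
        rw [lap, pdxx_uu, pdyy_uu, e1, e2]; ring
      · show _ = hessDet uu p
        rw [hessDet, pdxx_uu, pdyy_uu, pdxy_uu, e1, e2]; ring
    · have e3 : gg' ((p.1 - 1/2)^2 + p.2^2) = 0 := gg'z h2
      have e4 : gg'' ((p.1 - 1/2)^2 + p.2^2) = 0 := gg''z h2
      refine ⟨1/64, ⟨by norm_num, le_refl _⟩, ?_⟩
      rw [GG, Prod.ext_iff, gg'z (le_refl _), gg''z (le_refl _)]
      constructor
      · show _ = lap uu p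
        rw [lap, pdxx_uu, pdyy_uu, e1, e2, e3, e4]; ring
      · show _ = hessDet uu p
        rw [hessDet, pdxx_uu, pdyy_uu, pdxy_uu, e1, e2, e3, e4]; ring

/-! ### The domain -/

noncomputable def Om : Set (ℝ × ℝ) := {p | p.1^2 + p.2^2 < 1}

lemma cont_f : Continuous (fun p : ℝ × ℝ => p.1^2 + p.2^2) :=
  ((continuous_fst.pow 2).add (continuous_snd.pow 2))

lemma isOpen_Om : IsOpen Om := isOpen_lt cont_f continuous_const

lemma convex_Om : Convex ℝ Om := by
  intro p hp q hq a b ha hb hab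
  simp only [Om, mem_setOf_eq] at *
  have h1 : (a*p.1+b*q.1)^2 + (a*p.2+b*q.2)^2 ≤ a*(p.1^2+p.2^2) + b*(q.1^2+q.2^2) := by
    nlinarith [sq_nonneg (p.1 - q.1), sq_nonneg (p.2 - q.2), mul_nonneg ha hb]
  calc (a • p + b • q).1 ^ 2 + (a • p + b • q).2 ^ 2
      = (a*p.1+b*q.1)^2 + (a*p.2+b*q.2)^2 := by simp [Prod.smul_def]
    _ ≤ a*(p.1^2+p.2^2) + b*(q.1^2+q.2^2) := h1
    _ < a*1 + b*1 := by
        rcases eq_or_lt_of_le ha with h|h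
        · rcases eq_or_lt_of_le hb with h'|h'
          · exfalso; rw [← h, ← h'] at hab; norm_num at hab
          · rw [← h]; simpa using (mul_lt_mul_of_pos_left hq h')
        · rcases eq_or_lt_of_le hb with h'|h'
          · rw [← h']; simpa using (mul_lt_mul_of_pos_left hp h)
          · have := add_lt_add (mul_lt_mul_of_pos_left hp h) (mul_lt_mul_of_pos_left hq h')
            linarith
    _ = 1 := by linarith

lemma closure_Om : closure Om = {p : ℝ × ℝ | p.1^2 + p.2^2 ≤ 1} := by
  apply Subset.antisymm
  · exact closure_minimal (fun p hp => show p.1^2+p.2^2 ≤ 1 from le_of_lt hp)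
      (isClosed_le cont_f continuous_const)
  · intro p hp
    simp only [mem_setOf_eq] at hp
    have h1 : Filter.Tendsto (fun t : ℝ => ((t*p.1, t*p.2) : ℝ × ℝ))
        (nhdsWithin 1 (Iio 1)) (nhds p) := by
      have : Filter.Tendsto (fun t : ℝ => ((t*p.1, t*p.2) : ℝ × ℝ)) (nhds 1)
          (nhds (1*p.1, 1*p.2)) :=
        ((continuous_id.mul continuous_const).prodMk
          (continuous_id.mul continuous_const)).tendsto 1
      simp only [one_mul] at this
      exact this.mono_left nhdsWithin_le_nhds
    refine mem_closure_of_tendsto h1 ?_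
    filter_upwards [Ioo_mem_nhdsLT (by norm_num : (0:ℝ) < 1)] with t ht
    simp only [Om, mem_setOf_eq]
    obtain ⟨ht0, ht1⟩ := ht
    have hs0 : 0 ≤ p.1^2 + p.2^2 := by positivity
    have h2 : t^2*(p.1^2+p.2^2) ≤ t^2 := by nlinarith
    have h3 : t^2 < 1 := by nlinarith
    nlinarith

lemma frontier_Om : frontier Om = {p : ℝ × ℝ | p.1^2 + p.2^2 = 1} := by
  rw [frontier, closure_Om, isOpen_Om.interior_eq]
  ext p
  simp only [mem_diff, mem_setOf_eq, Om]
  constructor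
  · rintro ⟨h1, h2⟩; linarith [not_lt.mp h2]
  · intro h; exact ⟨le_of_eq h, by simp [h]⟩

/-! ### The boundary curve -/

lemma an_ccos (z : ℂ) : AnalyticAt ℂ Complex.cos z := by
  have h : AnalyticAt ℂ (fun z => (Complex.exp (z*Complex.I)
      + Complex.exp (-z*Complex.I))/2) z := by
    apply AnalyticAt.div
    · exact ((analyticAt_id.mul analyticAt_const).cexp).add
        (((analyticAt_id.neg).mul analyticAt_const).cexp)
    · exact analyticAt_const
    · norm_num
  have e : Complex.cos = fun z => (Complex.exp (z*Complex.I)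
      + Complex.exp (-z*Complex.I))/2 := by
    funext w; rw [Complex.cos]
  rw [e]; exact h

lemma an_csin (z : ℂ) : AnalyticAt ℂ Complex.sin z := by
  have h : AnalyticAt ℂ (fun z => (Complex.exp (-z*Complex.I)
      - Complex.exp (z*Complex.I))*Complex.I/2) z := by
    apply AnalyticAt.div
    · exact ((((analyticAt_id.neg).mul analyticAt_const).cexp).sub
        ((analyticAt_id.mul analyticAt_const).cexp)).mul analyticAt_const
    · exact analyticAt_const
    · norm_num
  have e : Complex.sin = fun z => (Complex.exp (-z*Complex.I)
      - Complex.exp (z*Complex.I))*Complex.I/2 := by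
    funext w; rw [Complex.sin]
  rw [e]; exact h

lemma an_rcos (x : ℝ) : AnalyticAt ℝ Real.cos x := by
  have h : AnalyticAt ℝ (fun x : ℝ => (Complex.cos (x : ℂ)).re) x :=
    (Complex.reCLM.analyticAt _).comp
      (((an_ccos _).restrictScalars).comp (Complex.ofRealCLM.analyticAt x))
  exact h.congr (by filter_upwards with y; simp [Real.cos])

lemma an_rsin (x : ℝ) : AnalyticAt ℝ Real.sin x := by
  have h : AnalyticAt ℝ (fun x : ℝ => (Complex.sin (x : ℂ)).re) x :=
    (Complex.reCLM.analyticAt _).comp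
      (((an_csin _).restrictScalars).comp (Complex.ofRealCLM.analyticAt x))
  exact h.congr (by filter_upwards with y; simp [Real.sin])

lemma gamma_inj : InjOn (fun s : ℝ => (Real.cos s, Real.sin s)) (Ico 0 (2*Real.pi)) := by
  intro s hs t ht hst
  simp only [Prod.mk.injEq] at hst
  obtain ⟨hc, hsn⟩ := hst
  have he : Complex.exp (s*Complex.I) = Complex.exp (t*Complex.I) := by
    rw [Complex.exp_mul_I, Complex.exp_mul_I, ← Complex.ofReal_cos, ← Complex.ofReal_sin,
      ← Complex.ofReal_cos, ← Complex.ofReal_sin, hc, hsn]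
  obtain ⟨n, hn⟩ := Complex.exp_eq_exp_iff_exists_int.mp he
  have hn' : (s : ℂ) = t + n*(2*Real.pi) := by
    have hI : ((s : ℂ) - t - n*(2*Real.pi)) * Complex.I = 0 := by
      rw [sub_mul, sub_mul]; rw [hn]; ring
    rcases mul_eq_zero.mp hI with h|h
    · linear_combination h
    · exact absurd h Complex.I_ne_zero
  have hr : s = t + n*(2*Real.pi) := by
    have := congrArg Complex.re hn'
    simpa using this
  obtain ⟨hs0, hs2⟩ := hs
  obtain ⟨ht0, ht2⟩ := ht
  have hpi := Real.pi_pos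
  have hn0 : n = 0 := by
    by_contra hne
    rcases lt_or_gt_of_ne hne with h|h
    · have hn1 : n ≤ -1 := by omega
      have : (n : ℝ) ≤ -1 := by exact_mod_cast hn1
      nlinarith
    · have : (1 : ℝ) ≤ n := by exact_mod_cast h
      nlinarith
  rw [hn0] at hr; push_cast at hr; linarith

lemma gamma_range :
    {p : ℝ × ℝ | p.1^2 + p.2^2 = 1} = range (fun s : ℝ => (Real.cos s, Real.sin s)) := by
  ext p
  simp only [mem_setOf_eq, mem_range]
  constructor
  · intro hp
    set w : ℂ := p.1 + p.2*Complex.I with hw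
    have hre : w.re = p.1 := by simp [hw]
    have him : w.im = p.2 := by simp [hw]
    have habs : ‖w‖ = 1 := by
      have : ‖w‖ = Real.sqrt (p.1^2 + p.2^2) := by
        rw [Complex.norm_def, Complex.normSq_apply, hre, him]; ring_nf
      rw [this, hp, Real.sqrt_one]
    have hw0 : w ≠ 0 := by
      intro h; rw [h] at habs; simp at habs
    refine ⟨Complex.arg w, ?_⟩
    have h1 : Real.cos (Complex.arg w) = p.1 := by
      rw [Complex.cos_arg hw0, habs, hre]; simp
    have h2 : Real.sin (Complex.arg w) = p.2 := by
      rw [Complex.sin_arg, habs, him]; simp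
    rw [h1, h2]
  · rintro ⟨s, rfl⟩
    simp [Real.cos_sq_add_sin_sq]

/-! ### Non-radiality geometry -/

lemma circle_point (z c : ℝ × ℝ) (hc : c.1^2 + c.2^2 = 1/4)
    (hr : 1/16 ≤ (c.1 - z.1)^2 + (c.2 - z.2)^2) :
    ∃ p : ℝ × ℝ, p.1^2 + p.2^2 ≤ 1 ∧
      (p.1 - z.1)^2 + (p.2 - z.2)^2 = (c.1 - z.1)^2 + (c.2 - z.2)^2 ∧
      (p.1 - c.1)^2 + (p.2 - c.2)^2 = 1/4 := by
  obtain ⟨r2, hr2⟩ : ∃ r2 : ℝ, r2 = (c.1 - z.1)^2 + (c.2 - z.2)^2 := ⟨_, rfl⟩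
  have hr' : 1/16 ≤ r2 := by rw [hr2]; exact hr
  have hr2pos : 0 < r2 := by linarith
  have h0 : r2 ≠ 0 := ne_of_gt hr2pos
  obtain ⟨co, hco⟩ : ∃ co : ℝ, co = 1 - 1/(8*r2) := ⟨_, rfl⟩
  have hco1 : co ≤ 1 := by
    rw [hco]; have : 0 < 1/(8*r2) := by positivity
    linarith
  have hcon1 : -1 ≤ co := by
    rw [hco]
    have h8 : 1/(8*r2) ≤ 2 := by
      rw [div_le_iff₀ (by positivity)]; nlinarith
    linarith
  obtain ⟨si, hsi⟩ : ∃ si : ℝ, si = Real.sqrt (1 - co^2) := ⟨_, rfl⟩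
  have hsisq : si^2 = 1 - co^2 := by
    rw [hsi, Real.sq_sqrt]; nlinarith
  clear hsi hco1 hcon1
  have hdist : ((z.1 + co*(c.1 - z.1) - si*(c.2 - z.2)) - c.1)^2
      + ((z.2 + co*(c.2 - z.2) + si*(c.1 - z.1)) - c.2)^2 = 1/4 := by
    have e : ((z.1 + co*(c.1 - z.1) - si*(c.2 - z.2)) - c.1)^2
        + ((z.2 + co*(c.2 - z.2) + si*(c.1 - z.1)) - c.2)^2 = (2 - 2*co) * r2 := by
      linear_combination ((c.1-z.1)^2+(c.2-z.2)^2)*hsisq - (2-2*co)*hr2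
    rw [e, hco]
    field_simp
    ring
  have hzdist : ((z.1 + co*(c.1 - z.1) - si*(c.2 - z.2)) - z.1)^2
      + ((z.2 + co*(c.2 - z.2) + si*(c.1 - z.1)) - z.2)^2
      = (c.1 - z.1)^2 + (c.2 - z.2)^2 := by
    linear_combination ((c.1-z.1)^2+(c.2-z.2)^2)*hsisq
  refine ⟨(z.1 + co*(c.1 - z.1) - si*(c.2 - z.2), z.2 + co*(c.2 - z.2) + si*(c.1 - z.1)),
    ?_, hzdist, hdist⟩
  show (z.1 + co*(c.1 - z.1) - si*(c.2 - z.2))^2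
    + (z.2 + co*(c.2 - z.2) + si*(c.1 - z.1))^2 ≤ 1
  obtain ⟨p1, hp1⟩ : ∃ p1 : ℝ, p1 = z.1 + co*(c.1 - z.1) - si*(c.2 - z.2) := ⟨_, rfl⟩
  obtain ⟨p2, hp2⟩ : ∃ p2 : ℝ, p2 = z.2 + co*(c.2 - z.2) + si*(c.1 - z.1) := ⟨_, rfl⟩
  rw [← hp1, ← hp2]
  rw [← hp1, ← hp2] at hdist
  have hs : p1^2 + p2^2 = 2*(p1*c.1 + p2*c.2) := by linear_combination hdist - hc
  have hcs : (p1*c.1 + p2*c.2)^2 ≤ (p1^2+p2^2)*(c.1^2+c.2^2) := by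
    nlinarith [sq_nonneg (p1*c.2 - p2*c.1)]
  nlinarith [sq_nonneg (p1^2 + p2^2)]

end CtrEx

open scoped ContDiff

/-- **Example (necessity of real analyticity).** There exist a bounded, simply connected
domain `Ω ⊂ ℝ²` with real analytic boundary, a `C^∞` function `u` on `closure Ω`, not
identically zero and not radial about any point, and a `C^∞` function `Φ : ℝ² → ℝ` whose
zero set has empty interior, with `Φ(Δu, det D²u) = 0` in `Ω` and `u = 0`, `Du = 0` on
`∂Ω`. -/
theorem smooth_counterexample_exists :
    ∃ (Ω : Set (ℝ × ℝ)) (u : ℝ × ℝ → ℝ) (Φ : ℝ × ℝ → ℝ),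
      IsOpen Ω ∧ IsConnected Ω ∧ Bornology.IsBounded Ω ∧ SimplyConnectedSpace Ω ∧
      -- `∂Ω` is the image of a real analytic regular periodic Jordan curve
      (∃ (L : ℝ) (γ : ℝ → ℝ × ℝ), 0 < L ∧ AnalyticOnNhd ℝ γ Set.univ ∧
        (∀ s, γ (s + L) = γ s) ∧ InjOn γ (Ico 0 L) ∧ (∀ s, deriv γ s ≠ 0) ∧
        frontier Ω = range γ) ∧
      -- `u` is `C^∞` on `closure Ω`, not identically zero
      ContDiffOn ℝ (⊤ : ℕ∞) u (closure Ω) ∧ (∃ p ∈ closure Ω, u p ≠ 0) ∧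
      -- `u` is not radial with respect to any point of `ℝ²`
      (¬∃ z : ℝ × ℝ, ∀ q₁ ∈ closure Ω, ∀ q₂ ∈ closure Ω,
        (q₁.1 - z.1) ^ 2 + (q₁.2 - z.2) ^ 2 = (q₂.1 - z.1) ^ 2 + (q₂.2 - z.2) ^ 2 →
        u q₁ = u q₂) ∧
      -- `Φ` is `C^∞` and its zero set has empty interior
      ContDiff ℝ (⊤ : ℕ∞) Φ ∧ interior {z : ℝ × ℝ | Φ z = 0} = ∅ ∧
      -- the overdetermined problem
      (∀ p ∈ Ω, Φ (lap u p, hessDet u p) = 0) ∧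
      (∀ p ∈ frontier Ω, u p = 0 ∧ pdx u p = 0 ∧ pdy u p = 0) := by
  obtain ⟨Φ, hsupp, hΦsm, -⟩ :=
    (SS_compact.isClosed.isOpen_compl).exists_contDiff_support_eq (n := ⊤)
  have hΦzero : {z : ℝ × ℝ | Φ z = 0} = SS := by
    ext w
    simp only [mem_setOf_eq]
    constructor
    · intro hw
      by_contra hws
      have : w ∈ Function.support Φ := by rw [hsupp]; exact hws
      exact this hw
    · intro hw
      by_contra hne
      have : w ∈ Function.support Φ := hne
      rw [hsupp] at this
      exact this hw
  have h00 : ((0:ℝ), (0:ℝ)) ∈ Om := by norm_num [Om]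
  refine ⟨Om, uu, Φ, isOpen_Om, convex_Om.isConnected ⟨_, h00⟩, ?_, ?_, ?_, ?_, ?_, ?_,
    hΦsm, by rw [hΦzero]; exact SS_interior, ?_, ?_⟩
  · -- bounded
    refine (Metric.isBounded_closedBall (x := ((0:ℝ),(0:ℝ))) (r := 1)).subset ?_
    intro p hp
    have hp' : p.1^2 + p.2^2 < 1 := hp
    simp only [Metric.mem_closedBall, Prod.dist_eq, Real.dist_eq, sup_le_iff]
    constructor
    · rw [sub_zero]; nlinarith [abs_nonneg p.1, sq_abs p.1, sq_nonneg p.2]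
    · rw [sub_zero]; nlinarith [abs_nonneg p.2, sq_abs p.2, sq_nonneg p.1]
  · -- simply connected
    have : ContractibleSpace ↥Om := convex_Om.contractibleSpace ⟨_, h00⟩
    infer_instance
  · -- boundary curve
    refine ⟨2*Real.pi, fun s => (Real.cos s, Real.sin s), by positivity,
      fun x _ => (an_rcos x).prod (an_rsin x), ?_, gamma_inj, ?_, ?_⟩
    · intro s; simp [Real.cos_add_two_pi, Real.sin_add_two_pi]
    · intro s
      have h := (Real.hasDerivAt_cos s).prodMk (Real.hasDerivAt_sin s)
      rw [h.deriv]
      intro h0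
      rw [Prod.ext_iff] at h0
      obtain ⟨h1, h2⟩ := h0
      simp only [Prod.fst_zero, Prod.snd_zero] at h1 h2
      nlinarith [Real.sin_sq_add_cos_sq s]
    · rw [frontier_Om, gamma_range]
  · -- smooth on the closure
    have hq1 : ContDiff ℝ ∞ (fun p : ℝ × ℝ => (p.1 - 1/2)^2 + p.2^2) :=
      (((contDiff_fst.sub contDiff_const).pow 2).add (contDiff_snd.pow 2))
    have hq2 : ContDiff ℝ ∞ (fun p : ℝ × ℝ => (p.1 - (-1/2))^2 + p.2^2) :=
      (((contDiff_fst.sub contDiff_const).pow 2).add (contDiff_snd.pow 2))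
    exact ((hgg.comp hq1).add (hgg.comp hq2)).contDiffOn
  · -- not identically zero
    refine ⟨((1:ℝ)/2, (0:ℝ)), ?_, ?_⟩
    · rw [closure_Om]; norm_num
    · have : uu ((1:ℝ)/2, (0:ℝ)) = expNegInvGlue (1/64) := by
        have e1 : (((1:ℝ)/2) - 1/2)^2 + (0:ℝ)^2 = 0 := by norm_num
        have e2 : (((1:ℝ)/2) - (-1/2))^2 + (0:ℝ)^2 = 1 := by norm_num
        rw [uu]
        simp only [e1, e2]
        rw [ggz (by norm_num : (1:ℝ)/64 ≤ 1)]
        simp [gg]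
      rw [this]
      exact ne_of_gt (expNegInvGlue.pos_of_pos (by norm_num))
  · -- not radial about any point
    rintro ⟨z, hz⟩
    have key : ∀ c : ℝ × ℝ, (c = (1/2, 0) ∨ c = (-1/2, 0)) →
        (1/16 ≤ (c.1 - z.1)^2 + (c.2 - z.2)^2) → False := by
      intro c hcor hr
      have hc : c.1^2 + c.2^2 = 1/4 := by rcases hcor with rfl|rfl <;> norm_num
      obtain ⟨p, hpd, hpz, hpc⟩ := circle_point z c hc hr
      have hcmem : c ∈ closure Om := by
        rw [closure_Om]; rcases hcor with rfl|rfl <;> norm_num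
      have hpmem : p ∈ closure Om := by rw [closure_Om]; exact hpd
      have huc : uu c = expNegInvGlue (1/64) := by
        rcases hcor with rfl|rfl
        · have e1 : (((1:ℝ)/2) - 1/2)^2 + (0:ℝ)^2 = 0 := by norm_num
          have e2 : (((1:ℝ)/2) - (-1/2))^2 + (0:ℝ)^2 = 1 := by norm_num
          rw [uu]; simp only [e1, e2]
          rw [ggz (by norm_num : (1:ℝ)/64 ≤ 1)]; simp [gg]
        · have e1 : ((-(1:ℝ)/2) - 1/2)^2 + (0:ℝ)^2 = 1 := by norm_num
          have e2 : ((-(1:ℝ)/2) - (-1/2))^2 + (0:ℝ)^2 = 0 := by norm_num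
          rw [uu]
          simp only [show ((-1:ℝ)/2, (0:ℝ)).1 = -1/2 from rfl,
            show ((-1:ℝ)/2, (0:ℝ)).2 = 0 from rfl]
          rw [e1, e2, ggz (by norm_num : (1:ℝ)/64 ≤ 1)]; simp [gg]
      have hup : uu p = 0 := by
        have hq1 : 1/64 ≤ (p.1 - 1/2)^2 + p.2^2 := by
          rcases hcor with rfl|rfl
          · simp only at hpc; nlinarith
          · simp only at hpc; nlinarith [sq_nonneg (p.1 + 1/2), sq_nonneg p.2]
        have hq2 : 1/64 ≤ (p.1 - (-1/2))^2 + p.2^2 := by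
          rcases hcor with rfl|rfl
          · simp only at hpc; nlinarith [sq_nonneg (p.1 - 1/2), sq_nonneg p.2]
          · simp only at hpc; nlinarith
        rw [uu, ggz hq1, ggz hq2]; norm_num
      have := hz c hcmem p hpmem (by rw [hpz])
      rw [huc, hup] at this
      exact absurd this (ne_of_gt (expNegInvGlue.pos_of_pos (by norm_num)))
    rcases le_or_gt (1/16 : ℝ) ((1/2 - z.1)^2 + (0 - z.2)^2) with hr | hr
    · exact key (1/2, 0) (Or.inl rfl) (by simpa using hr)
    · refine key (-1/2, 0) (Or.inr rfl) ?_
      simp only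
      nlinarith [sq_nonneg (1/2 - z.1), sq_nonneg z.2]
  · -- the PDE
    intro p _
    have h := key_mem p
    by_contra hne
    have : (lap uu p, hessDet uu p) ∈ Function.support Φ := hne
    rw [hsupp] at this
    exact this h
  · -- boundary conditions
    intro p hp
    rw [frontier_Om] at hp
    have hp' : p.1^2 + p.2^2 = 1 := hp
    have hq1 : 1/64 ≤ (p.1 - 1/2)^2 + p.2^2 := by nlinarith [sq_nonneg (p.1 - 1)]
    have hq2 : 1/64 ≤ (p.1 - (-1/2))^2 + p.2^2 := by nlinarith [sq_nonneg (p.1 + 1)]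
    refine ⟨?_, ?_, ?_⟩
    · rw [uu, ggz hq1, ggz hq2]; norm_num
    · rw [pdx_uu, gg'z hq1, gg'z hq2]; ring
    · rw [pdy_uu, gg'z hq1, gg'z hq2]; ring
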